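/- Let W be the elliptic curve over ℚ with Weierstrass equation y² + xy + y = x³ + x² − 520x + 4745 (Weierstrass coefficients a₁ = 1, a₂ = 1, a₃ = 1, a₄ = −520, a₆ = 4745; curve 2130.j4). Then (13, 13) is a rational point of W of additive order exactly 4 in W(ℚ): one has 4 • (13, 13) = O while 2 • (13, 13) ≠ O, where O is the point at infinity. -/

import Mathlib

/-- The elliptic curve 2130.j4: `y² + xy + y = x³ + x² - 520x + 4745`. -/
def W2130j4 : WeierstrassCurve.Affine ℚ :=
  { a₁ := 1, a₂ := 1, a₃ := 1, a₄ := -520, a₆ := 4745 }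

open WeierstrassCurve.Affine

lemma some_congr {W : WeierstrassCurve.Affine ℚ} {x y x' y' : ℚ}
    {h : W.Nonsingular x y} {h' : W.Nonsingular x' y'} (hx : x = x') (hy : y = y') :
    Point.some _ _ h = Point.some _ _ h' := by subst hx; subst hy; rfl

/-- The rational point `(13, 13)` on the curve `y² + xy + y = x³ + x² - 520x + 4745` (2130.j4)
has additive order exactly 4: `4 • (13, 13) = O` while `2 • (13, 13) ≠ O`. -/
theorem order_four_point_2130j4 :
    ∃ h : W2130j4.Nonsingular 13 13,
      (4 : ℤ) • WeierstrassCurve.Affine.Point.some _ _ h = 0 ∧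
        (2 : ℤ) • WeierstrassCurve.Affine.Point.some _ _ h ≠ 0 := by
  have h : W2130j4.Nonsingular 13 13 := by
    rw [nonsingular_iff, equation_iff]
    norm_num [W2130j4]
  have hy : (13 : ℚ) ≠ W2130j4.negY 13 13 := by norm_num [negY, W2130j4]
  have h2 : W2130j4.Nonsingular (-27) 13 := by
    rw [nonsingular_iff, equation_iff]
    norm_num [W2130j4]
  have hslope : W2130j4.slope 13 13 13 13 = 0 := by
    rw [slope_of_Y_ne rfl hy]
    norm_num [negY, W2130j4]
  have hX : W2130j4.addX 13 13 (W2130j4.slope 13 13 13 13) = -27 := by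
    rw [hslope]; norm_num [addX, W2130j4]
  have hY : W2130j4.addY 13 13 13 (W2130j4.slope 13 13 13 13) = 13 := by
    rw [addY, negAddY, hX, hslope]; norm_num [negY, W2130j4]
  have hdouble : Point.some _ _ h + Point.some _ _ h = Point.some _ _ h2 := by
    rw [Point.add_self_of_Y_ne hy]
    exact some_congr hX hY
  have h2tor : (13 : ℚ) = W2130j4.negY (-27) 13 := by norm_num [negY, W2130j4]
  refine ⟨h, ?_, ?_⟩
  · have : (4 : ℤ) • Point.some _ _ h =
        (Point.some _ _ h + Point.some _ _ h) + (Point.some _ _ h + Point.some _ _ h) := by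
      rw [show (4 : ℤ) = 2 + 2 by norm_num, add_zsmul, two_zsmul]
    rw [this, hdouble, Point.add_self_of_Y_eq h2tor]
  · rw [two_zsmul, hdouble]
    exact Point.some_ne_zero h2
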